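/- Let Q = x_0^2 + ⋯ + x_n^2 ∈ ℂ[x_0,…,x_n], which has Waring rank n+1. For a nonzero vector (a_0,…,a_n) ∈ ℂ^{n+1}, the linear form L = a_0x_0 + ⋯ + a_nx_n lies in the Waring locus W_Q (i.e., appears in some minimal Waring decomposition of Q) if and only if a_0^2 + ⋯ + a_n^2 ≠ 0. Equivalently, the forbidden locus F_Q equals the quadric V(X_0^2 + ⋯ + X_n^2) ⊂ ℙ^n. -/

import Mathlib

open MvPolynomial

noncomputable section

/-- The linear form `c₀x₀ + ⋯ + cₙxₙ` with coefficient vector `c`. -/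
def lin {σ : Type*} [Fintype σ] (c : σ → ℂ) : MvPolynomial σ ℂ :=
  ∑ i, C (c i) * X i

/-- `F` admits a Waring decomposition `F = L₁^d + ⋯ + L_r^d`. -/
def HasWaringDecomp {σ : Type*} [Fintype σ] (d : ℕ) (F : MvPolynomial σ ℂ) (r : ℕ) : Prop :=
  ∃ L : Fin r → σ → ℂ, F = ∑ j, lin (L j) ^ d

/-- The Waring rank of `F` (as a form of degree `d`). -/
def waringRank {σ : Type*} [Fintype σ] (d : ℕ) (F : MvPolynomial σ ℂ) : ℕ :=
  sInf {r | HasWaringDecomp d F r}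

/-- The linear form with coefficient vector `a` lies in the Waring locus of `F`:
there are linear forms `L₂, …, L_r` with `r = rk F` such that `F` lies in the
`ℂ`-linear span of `L^d, L₂^d, …, L_r^d`. -/
def InWaringLocus {σ : Type*} [Fintype σ] (d : ℕ) (F : MvPolynomial σ ℂ) (a : σ → ℂ) : Prop :=
  ∃ (c : Fin (waringRank d F) → ℂ) (L : Fin (waringRank d F) → σ → ℂ)
    (j₀ : Fin (waringRank d F)), L j₀ = a ∧ F = ∑ j, c j • lin (L j) ^ d

namespace WAux

variable {m : ℕ}

def dot (a b : Fin m → ℂ) : ℂ := ∑ i, a i * b i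

lemma dot_single_right (x : Fin m → ℂ) (i : Fin m) : dot x (Pi.single i 1) = x i := by
  simp [dot, Pi.single_apply, mul_ite, Finset.mul_sum]

lemma dot_add_right (v x y : Fin m → ℂ) : dot v (x + y) = dot v x + dot v y := by
  simp [dot, mul_add, Finset.sum_add_distrib]

lemma dot_smul_left (s : ℂ) (w x : Fin m → ℂ) :
    dot (fun i => s * w i) x = s * dot w x := by
  simp [dot, Finset.mul_sum, mul_assoc]

lemma dot_self_add (x y : Fin m → ℂ) :
    dot (x + y) (x + y) = dot x x + 2 * dot x y + dot y y := by
  simp only [dot, Pi.add_apply, Finset.mul_sum]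
  rw [← Finset.sum_add_distrib, ← Finset.sum_add_distrib]
  exact Finset.sum_congr rfl fun i _ => by ring

lemma eval_lin (x c : Fin m → ℂ) : eval x (lin c) = dot c x := by
  simp [lin, dot]

lemma dot_eq_sum_sq (x : Fin m → ℂ) : dot x x = ∑ i, x i ^ 2 := by
  simp [dot, sq]

/-- Polarization -/
lemma polarize {r : ℕ} (c : Fin r → ℂ) (L : Fin r → Fin m → ℂ)
    (h : ∀ x, dot x x = ∑ j, c j * dot (L j) x ^ 2) (x y : Fin m → ℂ) :
    dot x y = ∑ j, c j * (dot (L j) x * dot (L j) y) := by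
  have h1 := h (x + y)
  have h2 := h x
  have h3 := h y
  rw [dot_self_add] at h1
  have e : ∀ j : Fin r, c j * dot (L j) (x + y) ^ 2
      = c j * dot (L j) x ^ 2 + 2 * (c j * (dot (L j) x * dot (L j) y))
        + c j * dot (L j) y ^ 2 := fun j => by rw [dot_add_right]; ring
  rw [Finset.sum_congr rfl fun j _ => e j, Finset.sum_add_distrib, Finset.sum_add_distrib,
    ← Finset.mul_sum] at h1
  linear_combination (h1 - h2 - h3) / 2

lemma nondeg (x : Fin m → ℂ) (h : ∀ y, dot x y = 0) : x = 0 := by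
  funext i
  simpa [dot_single_right] using h (Pi.single i 1)

/-- the linear map `x ↦ (dot (L j) x)_j`. -/
def phi {r : ℕ} (L : Fin r → Fin m → ℂ) : (Fin m → ℂ) →ₗ[ℂ] (Fin r → ℂ) where
  toFun x := fun j => dot (L j) x
  map_add' x y := by funext j; simp [dot_add_right]
  map_smul' s x := by
    funext j
    simp only [dot, Pi.smul_apply, smul_eq_mul, RingHom.id_apply, Finset.mul_sum]
    exact Finset.sum_congr rfl fun i _ => by ring

lemma phi_injective {r : ℕ} (c : Fin r → ℂ) (L : Fin r → Fin m → ℂ)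
    (h : ∀ x y, dot x y = ∑ j, c j * (dot (L j) x * dot (L j) y)) :
    Function.Injective (phi L) := by
  rw [injective_iff_map_eq_zero]
  intro x hx
  refine nondeg x fun y => ?_
  have hj : ∀ j, dot (L j) x = 0 := fun j => congrFun hx j
  rw [h x y]
  simp [hj]

/-- Householder columns -/
def hh (v : Fin m → ℂ) (k : Fin m) : Fin m → ℂ :=
  fun i => (if i = k then 1 else 0) - 2 * v k / dot v v * v i

lemma dot_hh (v x : Fin m → ℂ) (k : Fin m) :
    dot (hh v k) x = x k - 2 * v k / dot v v * dot v x := by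
  have e : ∀ i, hh v k i * x i
      = (if i = k then x i else 0) - 2 * v k / dot v v * (v i * x i) := by
    intro i
    rw [hh]
    by_cases h : i = k <;> simp [h] <;> ring
  rw [dot, Finset.sum_congr rfl fun i _ => e i, Finset.sum_sub_distrib, ← Finset.mul_sum,
    Finset.sum_ite_eq' Finset.univ k x]
  simp only [Finset.mem_univ, if_true]
  rfl

lemma hh_identity (v : Fin m → ℂ) (hv : dot v v ≠ 0) (x y : Fin m → ℂ) :
    ∑ k, dot (hh v k) x * dot (hh v k) y = dot x y := by
  set μ := dot v v with hμ
  set dx := dot v x with hdx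
  set dy := dot v y with hdy
  have e : ∀ k : Fin m, dot (hh v k) x * dot (hh v k) y
      = x k * y k - 2 * dy / μ * (v k * x k) - 2 * dx / μ * (v k * y k)
        + 4 * dx * dy / μ ^ 2 * (v k * v k) := by
    intro k
    rw [dot_hh, dot_hh, ← hμ, ← hdx, ← hdy]
    field_simp
    ring
  rw [Finset.sum_congr rfl fun k _ => e k]
  rw [Finset.sum_add_distrib, Finset.sum_sub_distrib, Finset.sum_sub_distrib,
    ← Finset.mul_sum, ← Finset.mul_sum, ← Finset.mul_sum]
  have h1 : ∑ k, v k * x k = dx := rfl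
  have h2 : ∑ k, v k * y k = dy := rfl
  have h3 : ∑ k, v k * v k = μ := rfl
  have h4 : ∑ k, x k * y k = dot x y := rfl
  rw [h1, h2, h3, h4]
  field_simp
  ring

/-- Orthogonal decomposition of the dot product with prescribed first vector. -/
lemma exists_ortho (a : Fin (m + 1) → ℂ) (ha : dot a a ≠ 0) :
    ∃ (c : Fin (m + 1) → ℂ) (L : Fin (m + 1) → Fin (m + 1) → ℂ),
      L 0 = a ∧ ∀ x y, dot x y = ∑ j, c j * (dot (L j) x * dot (L j) y) := by
  obtain ⟨t, ht⟩ := IsAlgClosed.exists_pow_nat_eq (dot a a) (n := 2) (by norm_num)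
  have htne : t ≠ 0 := fun h => ha (by rw [← ht, h]; ring)
  set u : Fin (m + 1) → ℂ := fun i => t⁻¹ * a i with hu
  have huu : dot u u = 1 := by
    have : dot u u = t⁻¹ * (t⁻¹ * dot a a) := by
      rw [dot, dot, Finset.mul_sum, Finset.mul_sum]
      exact Finset.sum_congr rfl fun i _ => by rw [hu]; ring
    rw [this, ← ht]
    field_simp
  set ε : ℂ := if u 0 = 1 then -1 else 1 with hε
  have hε2 : ε ^ 2 = 1 := by rw [hε]; split <;> norm_num
  set v : Fin (m + 1) → ℂ := fun i => u i - (if i = 0 then ε else 0) with hv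
  have hvv : dot v v = 2 - 2 * ε * u 0 := by
    have expand : ∀ i, v i * v i
        = u i * u i - (if i = 0 then 2 * ε * u i - ε * ε else 0) := by
      intro i
      simp only [hv]
      by_cases h : i = 0 <;> simp [h] <;> ring
    rw [dot, Finset.sum_congr rfl fun i _ => expand i, Finset.sum_sub_distrib,
      Finset.sum_ite_eq' Finset.univ (0 : Fin (m + 1)) (fun i => 2 * ε * u i - ε * ε)]
    have h1 : ∑ i, u i * u i = 1 := huu
    simp only [Finset.mem_univ, if_true, h1]
    linear_combination hε2
  have hvvne : dot v v ≠ 0 := by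
    by_cases h : u 0 = 1
    · rw [hvv, hε, if_pos h, h]; norm_num
    · rw [hvv, hε, if_neg h]
      intro hc
      exact h (by linear_combination -hc / 2)
  have key : 2 * v 0 / dot v v = -ε := by
    have hv0 : v 0 = u 0 - ε := by simp [hv]
    rw [hv0, hvv, div_eq_iff (by rw [← hvv]; exact hvvne)]
    linear_combination (-2 * u 0) * hε2
  have hh0 : hh v 0 = fun i => ε * u i := by
    funext i
    rw [hh, key]
    simp only [hv]
    by_cases h : i = 0
    · subst h
      rw [if_pos rfl, if_pos rfl]
      linear_combination -hε2
    · rw [if_neg h, if_neg h]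
      ring
  refine ⟨fun j => if j = 0 then (dot a a)⁻¹ else 1,
    fun j => if j = 0 then a else hh v j, by simp, fun x y => ?_⟩
  rw [← hh_identity v hvvne x y]
  refine (Finset.sum_congr rfl fun j _ => ?_).symm
  by_cases h : j = 0
  · subst h
    simp only [if_pos rfl, ite_true]
    rw [hh0]
    have hx : ∀ z, dot (fun i => ε * u i) z = ε * t⁻¹ * dot a z := by
      intro z
      rw [dot, dot, Finset.mul_sum]
      exact Finset.sum_congr rfl fun i _ => by rw [hu]; ring
    rw [hx x, hx y, ← ht]
    have h2 : t ^ 2 ≠ 0 := pow_ne_zero 2 htne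
    field_simp
    linear_combination (-(dot a x * dot a y)) * hε2
  · simp only [if_neg h]
    ring

lemma finrank_fun (k : ℕ) : Module.finrank ℂ (Fin k → ℂ) = k := by
  simp

end WAux

open WAux

/-- the Waring/forbidden locus of the quadric `x₀² + ⋯ + xₙ²`:
it has Waring rank `n+1`, and a nonzero linear form `a₀x₀ + ⋯ + aₙxₙ` lies in the
Waring locus iff `a₀² + ⋯ + aₙ² ≠ 0`. -/
theorem waring_locus_standard_quadric (n : ℕ) :
    waringRank 2 (∑ i : Fin (n + 1), (X i : MvPolynomial (Fin (n + 1)) ℂ) ^ 2) = n + 1 ∧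
    ∀ a : Fin (n + 1) → ℂ, a ≠ 0 →
      (InWaringLocus 2 (∑ i : Fin (n + 1), (X i : MvPolynomial (Fin (n + 1)) ℂ) ^ 2) a ↔
        ∑ i, a i ^ 2 ≠ 0) := by
  set Q : MvPolynomial (Fin (n + 1)) ℂ := ∑ i, X i ^ 2 with hQdef
  have evalQ : ∀ x : Fin (n + 1) → ℂ, eval x Q = dot x x := by
    intro x
    rw [hQdef, dot_eq_sum_sq]
    simp
  -- membership
  have hmem : HasWaringDecomp 2 Q (n + 1) := by
    refine ⟨fun j => Pi.single j 1, MvPolynomial.funext fun x => ?_⟩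
    rw [evalQ, dot_eq_sum_sq]
    simp only [map_sum, map_pow, eval_lin]
    refine Finset.sum_congr rfl fun j _ => ?_
    congr 1
    have : dot (Pi.single j 1) x = x j := by
      simp [dot, Pi.single_apply, ite_mul]
    rw [this]
  -- lower bound
  have hlb : ∀ r, HasWaringDecomp 2 Q r → n + 1 ≤ r := by
    intro r ⟨L, hL⟩
    have hev : ∀ x, dot x x = ∑ j, (1 : ℂ) * dot (L j) x ^ 2 := by
      intro x
      have := congrArg (eval x) hL
      rw [evalQ] at this
      simpa [eval_lin] using this
    have hpol := polarize (fun _ => 1) L hev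
    have hinj : Function.Injective (phi L) :=
      phi_injective (fun _ => 1) L hpol
    have := LinearMap.finrank_le_finrank_of_injective hinj
    rwa [finrank_fun, finrank_fun] at this
  have hrank : waringRank 2 Q = n + 1 :=
    le_antisymm (Nat.sInf_le hmem) (le_csInf ⟨n + 1, hmem⟩ fun r hr => hlb r hr)
  refine ⟨hrank, fun a _ => ?_⟩
  rw [InWaringLocus, hrank]
  constructor
  · rintro ⟨c, L, j₀, hLj, hF⟩
    have hev : ∀ x, dot x x = ∑ j, c j * dot (L j) x ^ 2 := by
      intro x
      have := congrArg (eval x) hF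
      rw [evalQ] at this
      simpa [eval_lin, smul_eval] using this
    have hpol := polarize c L hev
    have hinj := phi_injective c L hpol
    have hsurj := LinearMap.injective_iff_surjective.mp hinj
    obtain ⟨w, hw⟩ := hsurj (Pi.single j₀ 1)
    have hφw : ∀ j, dot (L j) w = (Pi.single j₀ 1 : Fin (n + 1) → ℂ) j :=
      fun j => congrFun hw j
    have h1 : dot a w = 1 := by
      rw [← hLj, hφw j₀, Pi.single_eq_same]
    have h2 : dot a w = c j₀ * dot a a := by
      rw [hpol a w]
      have : ∀ j, c j * (dot (L j) a * dot (L j) w)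
          = if j = j₀ then c j₀ * dot a a else 0 := by
        intro j
        rw [hφw j, Pi.single_apply]
        by_cases h : j = j₀
        · subst h; rw [if_pos rfl, if_pos rfl, hLj]; ring
        · rw [if_neg h, if_neg h]; ring
      rw [Finset.sum_congr rfl fun j _ => this j, Finset.sum_ite_eq' Finset.univ j₀]
      simp
    intro hzero
    rw [← dot_eq_sum_sq] at hzero
    rw [h2, hzero, mul_zero] at h1
    exact one_ne_zero h1.symm
  · intro hzero
    have ha : dot a a ≠ 0 := by rwa [dot_eq_sum_sq]
    obtain ⟨c, L, hL0, hid⟩ := exists_ortho a ha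
    refine ⟨c, L, 0, hL0, MvPolynomial.funext fun x => ?_⟩
    rw [evalQ, hid x x]
    simp only [map_sum, smul_eval, map_pow, eval_lin]
    exact Finset.sum_congr rfl fun j _ => by ring

end
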